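/- Let q(z) be a real form of degree n and P(z) a real symmetric m×m matrix-valued form of degree n+1 in d variables. Then there exist real symmetric matrices A₁,…,A_d such that q(ζ)·P(z) = Ψ(ζ)(z₁A₁+⋯+z_dA_d)Ψ(z)ᵀ for all ζ, z ∈ ℂ^d, where Ψ(z) = (z^{α₁}I_m,…,z^{α_N}I_m) and z^{α₁},…,z^{α_N} are all monomials of degree n. -/

import Mathlib

open MvPolynomial

namespace ProdPolar

open Finset

variable {d : ℕ}

/-! ### counting helpers -/

lemma list_count_exists (γ : Fin d → ℕ) :
    ∃ l : List (Fin d), l.length = ∑ k, γ k ∧ ∀ k, l.count k = γ k := by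
  classical
  refine ⟨(∑ k, Multiset.replicate (γ k) k).toList, ?_, ?_⟩
  · rw [Multiset.length_toList]
    have : ∀ (s : Finset (Fin d)) (f : Fin d → Multiset (Fin d)),
        Multiset.card (∑ k ∈ s, f k) = ∑ k ∈ s, Multiset.card (f k) := by
      intro s f
      induction s using Finset.induction with
      | empty => simp
      | @insert a s h ih => simp [Finset.sum_insert h, ih]
    rw [this]; simp
  · intro k
    rw [← Multiset.coe_count, Multiset.coe_toList, Multiset.count_sum']
    simp [Multiset.count_replicate]

lemma getD_count (l : List (Fin d)) (d₀ : Fin d) (k : Fin d) :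
    (∑ i ∈ Finset.range l.length, if l.getD i d₀ = k then 1 else 0) = l.count k := by
  induction l with
  | nil => simp
  | cons h tl ih =>
      rw [List.length_cons, Finset.sum_range_succ']
      simp only [List.getD_cons_succ, List.getD_cons_zero]
      rw [ih, List.count_cons]
      congr 1
      simp [beq_iff_eq]

/-- number of `i ∈ [a,b)` with `c i = k` -/
def cnt (c : ℕ → Fin d) (a b : ℕ) (k : Fin d) : ℕ :=
  ∑ i ∈ Finset.Ico a b, if c i = k then 1 else 0

lemma cnt_add (c : ℕ → Fin d) {a b e : ℕ} (h1 : a ≤ b) (h2 : b ≤ e) (k : Fin d) :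
    cnt c a b k + cnt c b e k = cnt c a e k :=
  Finset.sum_Ico_consecutive _ h1 h2

lemma cnt_succ (c : ℕ → Fin d) (a : ℕ) (k : Fin d) :
    cnt c a (a + 1) k = if c a = k then 1 else 0 := by
  rw [cnt, Nat.Ico_succ_singleton, Finset.sum_singleton]

lemma cnt_empty (c : ℕ → Fin d) {a b : ℕ} (h : b ≤ a) (k : Fin d) :
    cnt c a b k = 0 := by
  rw [cnt, Finset.Ico_eq_empty (by omega), Finset.sum_empty]

lemma cnt_sum (c : ℕ → Fin d) {a b : ℕ} : ∑ k, cnt c a b k = b - a := by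
  unfold cnt
  rw [Finset.sum_comm]
  simp [Finset.sum_ite_eq, Nat.card_Ico]

/-! ### the walk -/

/-- the walk vertices at even times -/
def xe (n : ℕ) (c : ℕ → Fin d) (s : ℕ) : Fin d → ℕ := fun k => cnt c s (n + s) k

/-- the walk vertices at odd times -/
def xo (n : ℕ) (c : ℕ → Fin d) (s : ℕ) : Fin d → ℕ :=
  fun k => cnt c 0 s k + cnt c (n + s + 1) (2 * n + 1) k

lemma ie (n : ℕ) (c : ℕ → Fin d) {s : ℕ} (hs : s ≤ n) (k : Fin d) :
    xe n c s k + xo n c s k + (if c (n + s) = k then 1 else 0) = cnt c 0 (2 * n + 1) k := by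
  have e1 := cnt_add c (Nat.zero_le s) (Nat.le_add_left s n) k
  have e2 := cnt_add c (Nat.zero_le (n + s)) (show n + s ≤ n + s + 1 by omega) k
  have e3 := cnt_add c (Nat.zero_le (n + s + 1)) (show n + s + 1 ≤ 2 * n + 1 by omega) k
  have e4 := cnt_succ c (n + s) k
  rw [xe, xo]
  omega

lemma io (n : ℕ) (c : ℕ → Fin d) {s : ℕ} (hs : s < n) (k : Fin d) :
    xo n c s k + xe n c (s + 1) k + (if c s = k then 1 else 0) = cnt c 0 (2 * n + 1) k := by
  have e1 := cnt_add c (Nat.zero_le s) (show s ≤ s + 1 by omega) k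
  have e2 := cnt_add c (Nat.zero_le (s + 1)) (show s + 1 ≤ n + s + 1 by omega) k
  have e3 := cnt_add c (Nat.zero_le (n + s + 1)) (show n + s + 1 ≤ 2 * n + 1 by omega) k
  have e4 := cnt_succ c s k
  rw [xe, xo]
  have : n + (s + 1) = n + s + 1 := by omega
  rw [this]
  omega

lemma xe_mem (n : ℕ) (c : ℕ → Fin d) (s : ℕ) :
    xe n c s ∈ Finset.Nat.antidiagonalTuple d n := by
  rw [Finset.Nat.mem_antidiagonalTuple]
  have := cnt_sum c (a := s) (b := n + s)
  rw [show (∑ i, xe n c s i) = ∑ k, cnt c s (n + s) k from rfl, this]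
  omega

lemma xo_mem (n : ℕ) (c : ℕ → Fin d) {s : ℕ} (hs : s ≤ n) :
    xo n c s ∈ Finset.Nat.antidiagonalTuple d n := by
  rw [Finset.Nat.mem_antidiagonalTuple]
  have h1 := cnt_sum c (a := 0) (b := s)
  have h2 := cnt_sum c (a := n + s + 1) (b := 2 * n + 1)
  rw [show (∑ i, xo n c s i) = (∑ k, cnt c 0 s k) + ∑ k, cnt c (n + s + 1) (2 * n + 1) k by
    rw [← Finset.sum_add_distrib]; rfl, h1, h2]
  omega

/-! ### monomial helpers -/

lemma mul_mon (z : Fin d → ℂ) (κ : Fin d) (v : Fin d → ℕ) :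
    z κ * ∏ t, z t ^ v t = ∏ t, z t ^ (v t + if κ = t then 1 else 0) := by
  have h1 : ∀ t : Fin d, z t ^ (v t + if κ = t then 1 else 0)
      = z t ^ v t * (if κ = t then z t else 1) := by
    intro t; split <;> simp [pow_add, pow_succ]
  rw [Finset.prod_congr rfl fun t _ => h1 t, Finset.prod_mul_distrib, Finset.prod_ite_eq]
  simp [mul_comm]

lemma mul_mon_eq (z : Fin d → ℂ) (κ κ' : Fin d) (v w : Fin d → ℕ)
    (h : ∀ k, v k + (if κ = k then 1 else 0) = w k + (if κ' = k then 1 else 0)) :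
    z κ * ∏ t, z t ^ v t = z κ' * ∏ t, z t ^ w t := by
  rw [mul_mon, mul_mon]
  exact Finset.prod_congr rfl fun t _ => by rw [h t]

lemma mon_of_eq (z : Fin d → ℂ) (κ : Fin d) (v w : Fin d → ℕ)
    (h : ∀ k, v k + (if κ = k then 1 else 0) = w k) :
    z κ * ∏ t, z t ^ v t = ∏ t, z t ^ w t := by
  rw [mul_mon]
  exact Finset.prod_congr rfl fun t _ => by rw [h t]

/-! ### the functional Φ -/

noncomputable def Phi (d n : ℕ) (ζ z : Fin d → ℂ) :
    ((Fin d → ℕ) → Fin d → (Fin d → ℕ) → ℂ) →ₗ[ℂ] ℂ where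
  toFun S := ∑ i : {α : Fin d → ℕ // α ∈ Finset.Nat.antidiagonalTuple d n},
      ∑ j : {α : Fin d → ℕ // α ∈ Finset.Nat.antidiagonalTuple d n},
        (∏ t, ζ t ^ i.1 t) * (∑ k, z k * S i.1 k j.1) * (∏ t, z t ^ j.1 t)
  map_add' S T := by
    simp only [Pi.add_apply, mul_add, add_mul, Finset.sum_add_distrib]
  map_smul' c S := by
    simp only [Pi.smul_apply, smul_eq_mul, RingHom.id_apply, Finset.mul_sum, Finset.sum_mul]
    refine Finset.sum_congr rfl fun i _ => Finset.sum_congr rfl fun j _ =>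
      Finset.sum_congr rfl fun k _ => ?_
    ring

/-- elementary tensor -/
def Efun (u : Fin d → ℕ) (κ : Fin d) (v : Fin d → ℕ) :
    (Fin d → ℕ) → Fin d → (Fin d → ℕ) → ℂ := fun α k α' =>
  (if α = u then 1 else 0) * (if k = κ then 1 else 0) * (if α' = v then 1 else 0)

lemma phi_single {n : ℕ} (ζ z : Fin d → ℂ) (u v : Fin d → ℕ) (κ : Fin d)
    (hu : u ∈ Finset.Nat.antidiagonalTuple d n) (hv : v ∈ Finset.Nat.antidiagonalTuple d n) :
    Phi d n ζ z (Efun u κ v) = (∏ t, ζ t ^ u t) * z κ * (∏ t, z t ^ v t) := by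
  show (∑ i : {α : Fin d → ℕ // α ∈ Finset.Nat.antidiagonalTuple d n},
      ∑ j : {α : Fin d → ℕ // α ∈ Finset.Nat.antidiagonalTuple d n},
        (∏ t, ζ t ^ i.1 t) * (∑ k, z k * ((if i.1 = u then 1 else 0) * (if k = κ then 1 else 0) *
          (if j.1 = v then 1 else 0))) * (∏ t, z t ^ j.1 t)) = _
  rw [Fintype.sum_eq_single (⟨u, hu⟩ : {α : Fin d → ℕ // α ∈ Finset.Nat.antidiagonalTuple d n})]
  · rw [Fintype.sum_eq_single (⟨v, hv⟩ : {α : Fin d → ℕ // α ∈ Finset.Nat.antidiagonalTuple d n})]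
    · rw [Fintype.sum_eq_single κ]
      · simp
      · intro k hk; simp [hk]
    · intro b hb
      have : ¬ b.1 = v := fun h => hb (Subtype.ext h)
      simp [this]
  · intro b hb
    have : ¬ b.1 = u := fun h => hb (Subtype.ext h)
    simp [this]

/-! ### the tensor S -/

noncomputable def Sdef (n : ℕ) (c : ℕ → Fin d) :
    (Fin d → ℕ) → Fin d → (Fin d → ℕ) → ℝ := fun i k j =>
  ((∑ s ∈ Finset.range (n + 1),
      ((if i = xe n c s then (1 : ℝ) else 0) * (if k = c (n + s) then 1 else 0) *
          (if j = xo n c s then 1 else 0)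
        + (if i = xo n c s then (1 : ℝ) else 0) * (if k = c (n + s) then 1 else 0) *
          (if j = xe n c s then 1 else 0)))
    - (∑ s ∈ Finset.range n,
      ((if i = xo n c s then (1 : ℝ) else 0) * (if k = c s then 1 else 0) *
          (if j = xe n c (s + 1) then 1 else 0)
        + (if i = xe n c (s + 1) then (1 : ℝ) else 0) * (if k = c s then 1 else 0) *
          (if j = xo n c s then 1 else 0)))) / 2

lemma Sdef_symm (n : ℕ) (c : ℕ → Fin d) (i j : Fin d → ℕ) (k : Fin d) :
    Sdef n c i k j = Sdef n c j k i := by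
  unfold Sdef
  congr 1
  congr 1
  · exact Finset.sum_congr rfl fun s _ => by ring
  · exact Finset.sum_congr rfl fun s _ => by ring

lemma Sdef_cast (n : ℕ) (c : ℕ → Fin d) :
    (fun α k α' => ((Sdef n c α k α' : ℝ) : ℂ)) =
      (2⁻¹ : ℂ) • ((∑ s ∈ Finset.range (n + 1),
          (Efun (xe n c s) (c (n + s)) (xo n c s) + Efun (xo n c s) (c (n + s)) (xe n c s)))
        - ∑ s ∈ Finset.range n,
          (Efun (xo n c s) (c s) (xe n c (s + 1)) + Efun (xe n c (s + 1)) (c s) (xo n c s))) := by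
  funext α k α'
  simp only [Sdef, Efun, Pi.smul_apply, Pi.sub_apply, Finset.sum_apply, Pi.add_apply,
    smul_eq_mul]
  push_cast [apply_ite ((↑) : ℝ → ℂ)]
  ring

/-! ### key lemma -/

lemma key_aux (n : ℕ) (γ β : Fin d → ℕ) (c : ℕ → Fin d)
    (hγ : ∀ k, cnt c 0 n k = γ k) (hβ : ∀ k, cnt c n (2 * n + 1) k = β k) :
    ∃ S : (Fin d → ℕ) → Fin d → (Fin d → ℕ) → ℝ,
      (∀ i k j, S i k j = S j k i) ∧
      ∀ ζ z : Fin d → ℂ,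
        Phi d n ζ z (fun α k α' => (S α k α' : ℂ)) = (∏ t, ζ t ^ γ t) * ∏ t, z t ^ β t := by
  have hσ : ∀ k, γ k + β k = cnt c 0 (2 * n + 1) k := by
    intro k
    rw [← hγ k, ← hβ k]
    exact cnt_add c (Nat.zero_le n) (by omega) k
  have hxe0 : xe n c 0 = γ := by
    funext k
    show cnt c 0 (n + 0) k = γ k
    rw [Nat.add_zero]; exact hγ k
  have hxon : xo n c n = γ := by
    funext k
    show cnt c 0 n k + cnt c (n + n + 1) (2 * n + 1) k = γ k
    rw [show cnt c (n + n + 1) (2 * n + 1) k = 0 from cnt_empty c (by omega) k, hγ k]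
    omega
  refine ⟨Sdef n c, fun i k j => Sdef_symm n c i j k, ?_⟩
  intro ζ z
  rw [Sdef_cast n c, map_smul, map_sub, map_sum, map_sum]
  simp only [map_add]
  have hA : ∀ s ∈ Finset.range (n + 1),
      Phi d n ζ z (Efun (xe n c s) (c (n + s)) (xo n c s))
        + Phi d n ζ z (Efun (xo n c s) (c (n + s)) (xe n c s))
      = ((∏ t, ζ t ^ xe n c s t) * z (c (n + s)) * ∏ t, z t ^ xo n c s t)
        + ((∏ t, ζ t ^ xo n c s t) * z (c (n + s)) * ∏ t, z t ^ xe n c s t) := by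
    intro s hs
    have hsn : s ≤ n := by simpa [Nat.lt_succ_iff] using Finset.mem_range.mp hs
    rw [phi_single ζ z _ _ _ (xe_mem n c s) (xo_mem n c hsn),
      phi_single ζ z _ _ _ (xo_mem n c hsn) (xe_mem n c s)]
  have hB : ∀ s ∈ Finset.range n,
      Phi d n ζ z (Efun (xo n c s) (c s) (xe n c (s + 1)))
        + Phi d n ζ z (Efun (xe n c (s + 1)) (c s) (xo n c s))
      = ((∏ t, ζ t ^ xo n c s t) * z (c (n + s)) * ∏ t, z t ^ xe n c s t)
        + ((∏ t, ζ t ^ xe n c (s + 1) t) * z (c (n + (s + 1))) * ∏ t, z t ^ xo n c (s + 1) t) := by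
    intro s hs
    have hsn : s < n := Finset.mem_range.mp hs
    rw [phi_single ζ z _ _ _ (xo_mem n c hsn.le) (xe_mem n c (s + 1)),
      phi_single ζ z _ _ _ (xe_mem n c (s + 1)) (xo_mem n c hsn.le)]
    congr 1
    · -- (∏ ζ^(xo s)) * z (c s) * ∏ z^(xe (s+1)) = (∏ ζ^(xo s)) * z (c (n+s)) * ∏ z^(xe s)
      rw [mul_assoc, mul_assoc]
      congr 1
      refine mul_mon_eq z (c s) (c (n + s)) _ _ fun k => ?_
      have h1 := ie n c hsn.le k
      have h2 := io n c hsn k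
      omega
    · -- (∏ ζ^(xe (s+1))) * z (c s) * ∏ z^(xo s) = (∏ ζ^(xe (s+1))) * z (c (n+(s+1))) * ∏ z^(xo (s+1))
      rw [mul_assoc, mul_assoc]
      congr 1
      refine mul_mon_eq z (c s) (c (n + (s + 1))) _ _ fun k => ?_
      have h1 := io n c hsn k
      have h2 := ie n c (show s + 1 ≤ n by omega) k
      omega
  rw [Finset.sum_congr rfl hA, Finset.sum_congr rfl hB]
  rw [Finset.sum_add_distrib, Finset.sum_add_distrib, Finset.sum_range_succ'
    (fun s => (∏ t, ζ t ^ xe n c s t) * z (c (n + s)) * ∏ t, z t ^ xo n c s t) n,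
    Finset.sum_range_succ
    (fun s => (∏ t, ζ t ^ xo n c s t) * z (c (n + s)) * ∏ t, z t ^ xe n c s t) n]
  have hF0 : (∏ t, ζ t ^ xe n c 0 t) * z (c (n + 0)) * ∏ t, z t ^ xo n c 0 t
      = (∏ t, ζ t ^ γ t) * ∏ t, z t ^ β t := by
    rw [hxe0, mul_assoc]
    congr 1
    refine mon_of_eq z (c (n + 0)) _ _ fun k => ?_
    have h1 := ie n c (Nat.zero_le n) k
    have h2 := hσ k
    have h3 : xe n c 0 k = γ k := by rw [hxe0]
    omega
  have hGn : (∏ t, ζ t ^ xo n c n t) * z (c (n + n)) * ∏ t, z t ^ xe n c n t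
      = (∏ t, ζ t ^ γ t) * ∏ t, z t ^ β t := by
    rw [hxon, mul_assoc]
    congr 1
    refine mon_of_eq z (c (n + n)) _ _ fun k => ?_
    have h1 := ie n c (le_refl n) k
    have h2 := hσ k
    have h3 : xo n c n k = γ k := by rw [hxon]
    omega
  rw [hF0, hGn]
  rw [smul_eq_mul]
  ring

lemma key (n : ℕ) (γ β : Fin d → ℕ) :
    ∃ S : (Fin d → ℕ) → Fin d → (Fin d → ℕ) → ℝ,
      (∀ i k j, S i k j = S j k i) ∧
      ((∑ t, γ t) = n → (∑ t, β t) = n + 1 →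
        ∀ ζ z : Fin d → ℂ,
          Phi d n ζ z (fun α k α' => (S α k α' : ℂ)) =
            (∏ t, ζ t ^ γ t) * ∏ t, z t ^ β t) := by
  classical
  by_cases hc : (∑ t, γ t) = n ∧ (∑ t, β t) = n + 1
  · obtain ⟨h1, h2⟩ := hc
    obtain ⟨lγ, hlγ, hcγ⟩ := list_count_exists γ
    obtain ⟨lβ, hlβ, hcβ⟩ := list_count_exists β
    have hlγn : lγ.length = n := by rw [hlγ, h1]
    have hlβn : lβ.length = n + 1 := by rw [hlβ, h2]
    have hlen : 0 < lβ.length := by omega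
    set d₀ := lβ.get ⟨0, hlen⟩ with hd₀
    set c : ℕ → Fin d := fun i => (lγ ++ lβ).getD i d₀ with hc_def
    have hγ' : ∀ k, cnt c 0 n k = γ k := by
      intro k
      rw [cnt, ← Finset.range_eq_Ico]
      have he : ∀ i ∈ Finset.range n, (if c i = k then 1 else 0) =
          (if lγ.getD i d₀ = k then 1 else 0) := by
        intro i hi
        show (if (lγ ++ lβ).getD i d₀ = k then 1 else 0) = _
        rw [List.getD_append _ _ _ _ (by rw [hlγn]; exact Finset.mem_range.mp hi)]
      rw [Finset.sum_congr rfl he, ← hlγn, getD_count, hcγ]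
    have hβ' : ∀ k, cnt c n (2 * n + 1) k = β k := by
      intro k
      rw [cnt, Finset.sum_Ico_eq_sum_range]
      have hr : 2 * n + 1 - n = n + 1 := by omega
      rw [hr]
      have he : ∀ i ∈ Finset.range (n + 1), (if c (n + i) = k then 1 else 0) =
          (if lβ.getD i d₀ = k then 1 else 0) := by
        intro i hi
        show (if (lγ ++ lβ).getD (n + i) d₀ = k then 1 else 0) = _
        have hgr : (lγ ++ lβ).getD (n + i) d₀ = lβ.getD (n + i - lγ.length) d₀ :=
          List.getD_append_right _ _ _ _ (by omega)
        rw [hgr, hlγn]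
        congr 3
        omega
      rw [Finset.sum_congr rfl he, ← hlβn, getD_count, hcβ]
    obtain ⟨S, hs1, hs2⟩ := key_aux n γ β c hγ' hβ'
    exact ⟨S, hs1, fun _ _ => hs2⟩
  · exact ⟨0, fun i k j => rfl, fun h1 h2 => absurd ⟨h1, h2⟩ hc⟩

/-! ### aeval of a homogeneous polynomial -/

lemma aeval_homog {N : ℕ} (p : MvPolynomial (Fin d) ℝ) (hp : p.IsHomogeneous N)
    (z : Fin d → ℂ) :
    aeval z p = ∑ β ∈ Finset.Nat.antidiagonalTuple d N,
      ((coeff (Finsupp.equivFunOnFinite.symm β) p : ℝ) : ℂ) * ∏ t, z t ^ β t := by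
  classical
  rw [aeval_def, eval₂_eq']
  have hstep : ∑ β ∈ Finset.Nat.antidiagonalTuple d N,
      ((coeff (Finsupp.equivFunOnFinite.symm β) p : ℝ) : ℂ) * ∏ t, z t ^ β t
      = ∑ δ ∈ (Finset.Nat.antidiagonalTuple d N).image
          (⇑(Finsupp.equivFunOnFinite (α := Fin d) (M := ℕ)).symm),
          ((coeff δ p : ℝ) : ℂ) * ∏ t, z t ^ δ t := by
    rw [Finset.sum_image (fun a _ b _ h => Finsupp.equivFunOnFinite.symm.injective h)]
    refine Finset.sum_congr rfl fun β hβ => ?_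
    simp [Finsupp.coe_equivFunOnFinite_symm]
  rw [hstep]
  simp only [Complex.coe_algebraMap]
  refine Finset.sum_subset ?_ ?_
  · intro δ hδ
    rw [Finset.mem_image]
    refine ⟨⇑δ, ?_, Finsupp.equivFunOnFinite_symm_coe δ⟩
    rw [Finset.Nat.mem_antidiagonalTuple]
    by_contra hne
    refine (mem_support_iff.mp hδ) (hp.coeff_eq_zero ?_)
    rwa [Finsupp.degree_apply, show (∑ a ∈ δ.support, δ a) = ∑ t, δ t from
      Finset.sum_subset (Finset.subset_univ _)
        (fun x _ hx => Finsupp.notMem_support_iff.mp hx)]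
  · intro δ _ hδ
    rw [MvPolynomial.notMem_support_iff.mp hδ]
    simp

end ProdPolar

theorem product_polarization
    {d n m : ℕ} (q : MvPolynomial (Fin d) ℝ)
    (P : Matrix (Fin m) (Fin m) (MvPolynomial (Fin d) ℝ))
    (hq : q.IsHomogeneous n)
    (hPsymm : ∀ a b, P a b = P b a)
    (hPhom : ∀ a b, (P a b).IsHomogeneous (n + 1)) :
    ∃ A : Fin d → Matrix ({α : Fin d → ℕ // α ∈ Finset.Nat.antidiagonalTuple d n} × Fin m)
                         ({α : Fin d → ℕ // α ∈ Finset.Nat.antidiagonalTuple d n} × Fin m) ℝ,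
      (∀ k, (A k).IsSymm) ∧
      ∀ (ζ z : Fin d → ℂ) (a b : Fin m),
        (aeval ζ q) * (aeval z (P a b)) =
          ∑ i : {α : Fin d → ℕ // α ∈ Finset.Nat.antidiagonalTuple d n},
            ∑ j : {α : Fin d → ℕ // α ∈ Finset.Nat.antidiagonalTuple d n},
              (∏ t, ζ t ^ i.1 t) *
                (∑ k, z k * (A k (i, a) (j, b) : ℂ)) * ∏ t, z t ^ j.1 t := by
  classical
  choose S hS1 hS2 using fun γ β => ProdPolar.key (d := d) n γ β
  refine ⟨fun k p1 p2 =>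
      ∑ γ ∈ Finset.Nat.antidiagonalTuple d n, ∑ β ∈ Finset.Nat.antidiagonalTuple d (n + 1),
        coeff (Finsupp.equivFunOnFinite.symm γ) q *
          coeff (Finsupp.equivFunOnFinite.symm β) (P p1.2 p2.2) * S γ β p1.1 k p2.1, ?_, ?_⟩
  · intro k
    refine Matrix.ext fun p1 p2 => ?_
    erw [Matrix.transpose_apply]
    refine Finset.sum_congr rfl fun γ _ => Finset.sum_congr rfl fun β _ => ?_
    rw [hPsymm p2.2 p1.2, hS1 γ β p2.1 k p1.1]
  · intro ζ z a b
    rw [ProdPolar.aeval_homog q hq ζ, ProdPolar.aeval_homog (P a b) (hPhom a b) z,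
      Finset.sum_mul_sum]
    have hfun : (fun α k α' =>
        ((∑ γ ∈ Finset.Nat.antidiagonalTuple d n, ∑ β ∈ Finset.Nat.antidiagonalTuple d (n + 1),
          coeff (Finsupp.equivFunOnFinite.symm γ) q *
            coeff (Finsupp.equivFunOnFinite.symm β) (P a b) * S γ β α k α' : ℝ) : ℂ))
        = ∑ γ ∈ Finset.Nat.antidiagonalTuple d n, ∑ β ∈ Finset.Nat.antidiagonalTuple d (n + 1),
            (((coeff (Finsupp.equivFunOnFinite.symm γ) q : ℝ) : ℂ) *
              ((coeff (Finsupp.equivFunOnFinite.symm β) (P a b) : ℝ) : ℂ)) •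
              (fun α k α' => ((S γ β α k α' : ℝ) : ℂ)) := by
      funext α k α'
      simp only [Finset.sum_apply, Pi.smul_apply, smul_eq_mul]
      push_cast
      refine Finset.sum_congr rfl fun γ _ => Finset.sum_congr rfl fun β _ => ?_
      ring
    have hmain : ProdPolar.Phi d n ζ z (fun α k α' =>
        ((∑ γ ∈ Finset.Nat.antidiagonalTuple d n, ∑ β ∈ Finset.Nat.antidiagonalTuple d (n + 1),
          coeff (Finsupp.equivFunOnFinite.symm γ) q *
            coeff (Finsupp.equivFunOnFinite.symm β) (P a b) * S γ β α k α' : ℝ) : ℂ))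
        = ∑ γ ∈ Finset.Nat.antidiagonalTuple d n, ∑ β ∈ Finset.Nat.antidiagonalTuple d (n + 1),
            ((coeff (Finsupp.equivFunOnFinite.symm γ) q : ℝ) : ℂ) * (∏ t, ζ t ^ γ t) *
              (((coeff (Finsupp.equivFunOnFinite.symm β) (P a b) : ℝ) : ℂ) * ∏ t, z t ^ β t) := by
      rw [hfun, map_sum]
      refine Finset.sum_congr rfl fun γ hγm => ?_
      rw [map_sum]
      refine Finset.sum_congr rfl fun β hβm => ?_
      rw [map_smul, hS2 γ β (Finset.Nat.mem_antidiagonalTuple.mp hγm)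
        (Finset.Nat.mem_antidiagonalTuple.mp hβm) ζ z, smul_eq_mul]
      ring
    exact hmain.symm
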